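/- Let 0 ≤ a < b ≤ 1 and consider the one-dimensional split framework on [a,b] with uniform density p(u) = 1/(b − a) and g(u) = (u − 1/2)². Then every best split s* satisfies 4·((s* − a)/(b − a))·((b − s*)/(b − a)) ≥ (1/12)^{2/3}. -/

import Mathlib

open MeasureTheory Set Real

noncomputable section

namespace RegressionTree18

/-- Impurity decrease on the node `[a,b]` for the uniform density `1/(b−a)` and
partial dependence function `g`:
`Δ(s) = (M(s) − M(b)P(s))²/(P(s)(1 − P(s)))` with `P(s) = (s−a)/(b−a)` and
`M(s) = ∫_a^s g(u)/(b−a) du` (and `Δ(a) = Δ(b) = 0`). -/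
def uniformDelta (a b : ℝ) (g : ℝ → ℝ) (s : ℝ) : ℝ :=
  ((∫ u in a..s, g u / (b - a)) - (∫ u in a..b, g u / (b - a)) * ((s - a) / (b - a))) ^ 2 /
    ((s - a) / (b - a) * (1 - (s - a) / (b - a)))

/-- `(x·K)²/x = x·K²`, valid in Lean even when `x = 0`. -/
lemma sq_mul_div_self (x K : ℝ) : (x * K) ^ 2 / x = x * K ^ 2 := by
  rcases eq_or_ne x 0 with h | h
  · simp [h]
  · field_simp

/-- Closed form for the integral `∫_a^s (u−1/2)²/(b−a) du`. -/
lemma integral_closed (a b s : ℝ) :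
    (∫ u in a..s, (u - 1 / 2) ^ 2 / (b - a))
      = ((s - 1 / 2) ^ 3 - (a - 1 / 2) ^ 3) / (3 * (b - a)) := by
  rw [intervalIntegral.integral_div,
    intervalIntegral.integral_comp_sub_right (f := fun x => x ^ 2) (1 / 2),
    integral_pow]
  norm_num [div_div]

/-- Closed form for the impurity decrease with `g(u) = (u−1/2)²`. -/
lemma uniformDelta_closed (a b : ℝ) (hab : a < b) (s : ℝ) :
    uniformDelta a b (fun u => (u - 1 / 2) ^ 2) s
      = ((s - a) / (b - a) * (1 - (s - a) / (b - a))) *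
          ((b - a) * ((2 * a + b - 3 / 2) + (b - a) * ((s - a) / (b - a))) / 3) ^ 2 := by
  have hL : b - a ≠ 0 := by intro h; linarith
  unfold uniformDelta
  simp only []
  rw [integral_closed a b s, integral_closed a b b]
  have hnum : ((s - 1 / 2) ^ 3 - (a - 1 / 2) ^ 3) / (3 * (b - a))
      - ((b - 1 / 2) ^ 3 - (a - 1 / 2) ^ 3) / (3 * (b - a)) * ((s - a) / (b - a))
      = ((s - a) / (b - a) * (1 - (s - a) / (b - a))) *
          (-((b - a) * ((2 * a + b - 3 / 2) + (b - a) * ((s - a) / (b - a))) / 3)) := by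
    field_simp
    ring
  rw [hnum, sq_mul_div_self]
  ring

/-- Key algebraic lemma: a maximizer of `u(1-u)(c+Lu)²` on `[0,1]` has
`u(1-u) ≥ 63/1024`. -/
lemma key (L c t : ℝ) (hL : 0 < L) (ht0 : 0 ≤ t) (ht1 : t ≤ 1)
    (hmax : ∀ u ∈ Set.Icc (0 : ℝ) 1,
      u * (1 - u) * (c + L * u) ^ 2 ≤ t * (1 - t) * (c + L * t) ^ 2) :
    63 / 1024 ≤ t * (1 - t) := by
  have hx : 0 ≤ t * (1 - t) := by nlinarith
  have hLt : 0 ≤ L * t := mul_nonneg hL.le ht0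
  have hLt1 : L * t ≤ L := by nlinarith
  rcases le_or_gt (c + L / 2) 0 with hc | hc
  · -- here c ≤ -L/2 < 0 and Q = c²
    have hcneg : c < 0 := by linarith
    have h18 := hmax (1 / 8) (by norm_num)
    have hlow : (3 * c / 4) ^ 2 ≤ (c + L / 8) ^ 2 := by nlinarith
    have h1 : (63 / 1024) * c ^ 2 ≤ t * (1 - t) * (c + L * t) ^ 2 := by nlinarith
    have h2 : (c + L * t) ^ 2 ≤ c ^ 2 := by
      nlinarith [mul_nonneg hLt (show (0 : ℝ) ≤ -(2 * c + L * t) by linarith)]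
    have hc2 : (0 : ℝ) < c ^ 2 := by nlinarith
    have h3 : (63 / 1024) * c ^ 2 ≤ (t * (1 - t)) * c ^ 2 := by nlinarith
    exact le_of_mul_le_mul_right (by linarith) hc2
  · -- here c + L ≥ L/2 > 0 and Q = (c+L)²
    have hcpos : 0 < c + L := by linarith
    have h78 := hmax (7 / 8) (by norm_num)
    have hlow : (3 * (c + L) / 4) ^ 2 ≤ (c + L * (7 / 8)) ^ 2 := by nlinarith
    have h1 : (63 / 1024) * (c + L) ^ 2 ≤ t * (1 - t) * (c + L * t) ^ 2 := by nlinarith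
    have h2 : (c + L * t) ^ 2 ≤ (c + L) ^ 2 := by
      nlinarith [mul_nonneg (mul_nonneg hL.le (show (0 : ℝ) ≤ 1 - t by linarith))
        (show (0 : ℝ) ≤ 2 * c + L + L * t by linarith)]
    have hc2 : (0 : ℝ) < (c + L) ^ 2 := by positivity
    have h3 : (63 / 1024) * (c + L) ^ 2 ≤ (t * (1 - t)) * (c + L) ^ 2 := by nlinarith
    exact le_of_mul_le_mul_right (by linarith) hc2

/-- Numerical bound `(1/12)^{2/3} ≤ 63/256`. -/
lemma rpow_bound : ((1 : ℝ) / 12) ^ ((2 : ℝ) / 3) ≤ 63 / 256 := by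
  have hx : (0 : ℝ) ≤ ((1 : ℝ) / 12) ^ ((2 : ℝ) / 3) :=
    Real.rpow_nonneg (by norm_num) _
  have hcube : (((1 : ℝ) / 12) ^ ((2 : ℝ) / 3)) ^ (3 : ℕ) = 1 / 144 := by
    rw [← Real.rpow_natCast (((1 : ℝ) / 12) ^ ((2 : ℝ) / 3)) 3,
      ← Real.rpow_mul (by norm_num : (0 : ℝ) ≤ 1 / 12)]
    norm_num
  have h63 : (((1 : ℝ) / 12) ^ ((2 : ℝ) / 3)) ^ (3 : ℕ) ≤ (63 / 256 : ℝ) ^ (3 : ℕ) := by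
    rw [hcube]; norm_num
  exact le_of_pow_le_pow_left₀ (by norm_num) (by norm_num) h63

/-- For `g(u) = (u − 1/2)²` on `[a,b] ⊆ [0,1]` with the uniform
density, every best split `s*` satisfies `4 P(s*)(1 − P(s*)) ≥ (1/12)^{2/3}`. -/
theorem shifted_square_balancedness
    (a b : ℝ) (ha : 0 ≤ a) (hab : a < b) (hb : b ≤ 1)
    (sstar : ℝ) (hmem : sstar ∈ Set.Icc a b)
    (hmax : ∀ s ∈ Set.Icc a b,
      uniformDelta a b (fun u => (u - 1 / 2) ^ 2) s ≤
        uniformDelta a b (fun u => (u - 1 / 2) ^ 2) sstar) :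
    ((1 : ℝ) / 12) ^ ((2 : ℝ) / 3) ≤
      4 * ((sstar - a) / (b - a)) * ((b - sstar) / (b - a)) := by
  have hL : (0 : ℝ) < b - a := by linarith
  have hLne : b - a ≠ 0 := ne_of_gt hL
  have ht0 : 0 ≤ (sstar - a) / (b - a) := div_nonneg (by linarith [hmem.1]) hL.le
  have ht1 : (sstar - a) / (b - a) ≤ 1 := by
    rw [div_le_one hL]; linarith [hmem.2]
  -- transfer hmax to the normalized variable
  have hfac : (0 : ℝ) < (b - a) ^ 2 / 9 := by positivity
  have hmax' : ∀ u ∈ Set.Icc (0 : ℝ) 1,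
      u * (1 - u) * ((2 * a + b - 3 / 2) + (b - a) * u) ^ 2 ≤
        ((sstar - a) / (b - a)) * (1 - (sstar - a) / (b - a)) *
          ((2 * a + b - 3 / 2) + (b - a) * ((sstar - a) / (b - a))) ^ 2 := by
    intro u hu
    have hs : a + u * (b - a) ∈ Set.Icc a b := by
      constructor
      · nlinarith [hu.1]
      · nlinarith [hu.2]
    have h := hmax _ hs
    rw [uniformDelta_closed a b hab, uniformDelta_closed a b hab] at h
    have hsu : (a + u * (b - a) - a) / (b - a) = u := by field_simp; ring
    rw [hsu] at h
    have hsplit : ∀ v X : ℝ, v * ((b - a) * X / 3) ^ 2 = (v * X ^ 2) * ((b - a) ^ 2 / 9) := by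
      intro v X; ring
    rw [hsplit, hsplit] at h
    exact le_of_mul_le_mul_right h hfac
  have hkey := key (b - a) (2 * a + b - 3 / 2) ((sstar - a) / (b - a)) hL ht0 ht1 hmax'
  have hbs : (b - sstar) / (b - a) = 1 - (sstar - a) / (b - a) := by
    field_simp
    ring
  rw [hbs]
  calc ((1 : ℝ) / 12) ^ ((2 : ℝ) / 3) ≤ 63 / 256 := rpow_bound
    _ ≤ 4 * ((sstar - a) / (b - a)) * (1 - (sstar - a) / (b - a)) := by nlinarith

end RegressionTree18
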